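/- Let f be a drift function, G(x) = ∫₀ˣ (1/f)(y) dy, and let H : (G(−∞), G(+∞)) → ℝ be the inverse of G. Then H satisfies H(x) = ∫₀ˣ (f ∘ H)(y) dy for all x ∈ (G(−∞), G(+∞)). -/

import Mathlib

open MeasureTheory

/-- The primitive `G(x) = ∫₀ˣ (1/f)(y) dy` of the reciprocal of a drift
function `f` (with the convention `1/0 = ∞`). -/
noncomputable def primInv (f : ℝ → ℝ) (x : ℝ) : ℝ :=
  (∫⁻ y in Set.Ioc 0 x, (ENNReal.ofReal (f y))⁻¹ ∂volume).toReal -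
    (∫⁻ y in Set.Ioc x 0, (ENNReal.ofReal (f y))⁻¹ ∂volume).toReal

section Aux

open Set Filter Topology ENNReal

variable {f : ℝ → ℝ}

private lemma primInv_eq_measure (hd : Measurable fun y => (ENNReal.ofReal (f y))⁻¹) (x : ℝ) :
    primInv f x = ((volume.withDensity fun y => (ENNReal.ofReal (f y))⁻¹) (Ioc 0 x)).toReal -
      ((volume.withDensity fun y => (ENNReal.ofReal (f y))⁻¹) (Ioc x 0)).toReal := by
  rw [primInv, withDensity_apply _ measurableSet_Ioc, withDensity_apply _ measurableSet_Ioc]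

/-- difference formula -/
private lemma measure_diff_formula (μ : Measure ℝ) (hfin : ∀ a b : ℝ, μ (Ioc a b) ≠ ⊤)
    {a b : ℝ} (hab : a ≤ b) :
    (μ (Ioc 0 b)).toReal - (μ (Ioc b 0)).toReal -
      ((μ (Ioc 0 a)).toReal - (μ (Ioc a 0)).toReal) = (μ (Ioc a b)).toReal := by
  rcases le_total 0 a with h0a | ha0
  · have hb : (0:ℝ) ≤ b := h0a.trans hab
    have e1 : Ioc a 0 = (∅ : Set ℝ) := Ioc_eq_empty (by simp; linarith)
    have e2 : Ioc b 0 = (∅ : Set ℝ) := Ioc_eq_empty (by simp; linarith)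
    have e3 : μ (Ioc 0 b) = μ (Ioc 0 a) + μ (Ioc a b) := by
      rw [← measure_union (Set.Ioc_disjoint_Ioc_of_le le_rfl) measurableSet_Ioc,
        Ioc_union_Ioc_eq_Ioc h0a hab]
    rw [e1, e2, e3, ENNReal.toReal_add (hfin _ _) (hfin _ _)]
    simp
  · rcases le_total b 0 with hb0 | h0b
    · have e1 : Ioc 0 a = (∅ : Set ℝ) := Ioc_eq_empty (by simp; linarith)
      have e2 : Ioc 0 b = (∅ : Set ℝ) := Ioc_eq_empty (by simp; linarith)
      have e3 : μ (Ioc a 0) = μ (Ioc a b) + μ (Ioc b 0) := by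
        rw [← measure_union (Set.Ioc_disjoint_Ioc_of_le le_rfl) measurableSet_Ioc,
          Ioc_union_Ioc_eq_Ioc hab hb0]
      rw [e1, e2, e3, ENNReal.toReal_add (hfin _ _) (hfin _ _)]
      simp
    · have e1 : Ioc 0 a = (∅ : Set ℝ) := Ioc_eq_empty (by simp; linarith)
      have e2 : Ioc b 0 = (∅ : Set ℝ) := Ioc_eq_empty (by simp; linarith)
      have e3 : μ (Ioc a b) = μ (Ioc a 0) + μ (Ioc 0 b) := by
        rw [← measure_union (Set.Ioc_disjoint_Ioc_of_le le_rfl) measurableSet_Ioc,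
          Ioc_union_Ioc_eq_Ioc ha0 h0b]
      rw [e1, e2, e3, ENNReal.toReal_add (hfin _ _) (hfin _ _)]
      simp; ring

end Aux

open Set Filter Topology ENNReal in
/-- If `H` is the inverse of `G = primInv f` on `G(ℝ) = (G(-∞), G(+∞))`
(the range of `G`), then `H(x) = ∫₀ˣ f(H(y)) dy` on `G(ℝ)`. -/
theorem inverse_primInv_integral_representation
    (f : ℝ → ℝ) (hnn : ∀ x, 0 ≤ f x)
    (hrc : ∀ x, ContinuousWithinAt f (Set.Ici x) x)
    (hbv : LocallyBoundedVariationOn f Set.univ)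
    (hint : ∀ K : Set ℝ, IsCompact K →
      ∫⁻ x in K, (ENNReal.ofReal (f x))⁻¹ ∂volume < ⊤)
    (H : ℝ → ℝ) (hH : ∀ t, H (primInv f t) = t) :
    ∀ x ∈ Set.range (primInv f), H x = ∫ y in (0:ℝ)..x, f (H y) := by
  -- measurability of `f`
  obtain ⟨p, q, hp, hq, hpq⟩ := hbv.exists_monotoneOn_sub_monotoneOn
  have hmf : Measurable f := by
    rw [hpq]
    exact ((monotoneOn_univ.1 hp).measurable).sub ((monotoneOn_univ.1 hq).measurable)
  set d : ℝ → ℝ≥0∞ := fun y => (ENNReal.ofReal (f y))⁻¹ with hd_def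
  have hd : Measurable d := hmf.ennreal_ofReal.inv
  set μ : Measure ℝ := volume.withDensity d with hμ_def
  set G : ℝ → ℝ := primInv f with hG_def
  have hGm : ∀ x, G x = (μ (Ioc 0 x)).toReal - (μ (Ioc x 0)).toReal :=
    fun x => primInv_eq_measure hd x
  -- finiteness
  have hfin : ∀ a b : ℝ, μ (Ioc a b) ≠ ⊤ := by
    intro a b
    rw [hμ_def, withDensity_apply _ measurableSet_Ioc]
    exact ((lintegral_mono_set Ioc_subset_Icc_self).trans_lt (hint _ isCompact_Icc)).ne
  -- positivity
  have hpos : ∀ a b : ℝ, a < b → μ (Ioc a b) ≠ 0 := by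
    intro a b hab
    rw [hμ_def, withDensity_apply _ measurableSet_Ioc]
    refine (lt_of_lt_of_le ?_ le_rfl).ne'
    rw [pos_iff_ne_zero] at *
    have := (lintegral_pos_iff_support hd (μ := volume.restrict (Ioc a b))).2 ?_
    · exact this.ne'
    · have hsupp : Function.support d = univ := by
        ext y
        simp only [Function.mem_support, mem_univ, iff_true, hd_def]
        simp [ENNReal.inv_ne_zero]
      rw [hsupp]
      simp [Real.volume_Ioc, hab, sub_pos.2 hab]
  -- difference formula for G
  have hGdiff : ∀ {a b : ℝ}, a ≤ b → G b - G a = (μ (Ioc a b)).toReal := by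
    intro a b hab
    rw [hGm, hGm]
    exact measure_diff_formula μ hfin hab
  -- strict monotonicity
  have hGsm : StrictMono G := by
    intro a b hab
    have := hGdiff hab.le
    have hpos' : 0 < (μ (Ioc a b)).toReal :=
      ENNReal.toReal_pos (hpos a b hab) (hfin a b)
    linarith
  -- G 0 = 0
  have hG0 : G 0 = 0 := by simp [hGm]
  -- continuity of G
  have hGc : Continuous G := by
    rw [Metric.continuous_iff]
    intro a ε hε
    -- the measures of the shrinking intervals tend to μ {a} = 0
    have hiInter : ⋂ n : ℕ, Ioc (a - 1/(n+1)) (a + 1/(n+1)) = {a} := by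
      ext x
      simp only [mem_iInter, mem_Ioc, mem_singleton_iff]
      constructor
      · intro h
        have hx1 : x ≤ a := by
          refine le_of_forall_pos_le_add fun δ hδ => ?_
          obtain ⟨n, hn⟩ := exists_nat_one_div_lt hδ
          have := (h n).2
          linarith
        have hx2 : a ≤ x := by
          refine le_of_forall_pos_le_add fun δ hδ => ?_
          obtain ⟨n, hn⟩ := exists_nat_one_div_lt hδ
          have := (h n).1
          linarith
        linarith
      · rintro rfl
        intro n
        constructor
        · have : 0 < 1/((n:ℝ)+1) := by positivity
          linarith
        · have : 0 < 1/((n:ℝ)+1) := by positivity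
          linarith
    have hμa : μ {a} = 0 := withDensity_absolutelyContinuous volume d (Real.volume_singleton)
    have htend : Tendsto (fun n : ℕ => μ (Ioc (a - 1/(n+1)) (a + 1/(n+1)))) atTop (𝓝 0) := by
      have := tendsto_measure_iInter_atTop (μ := μ)
        (s := fun n : ℕ => Ioc (a - 1/(n+1)) (a + 1/(n+1)))
        (fun n => measurableSet_Ioc.nullMeasurableSet)
        (fun n m hnm => by
          apply Ioc_subset_Ioc
          · have : 1/((m:ℝ)+1) ≤ 1/((n:ℝ)+1) := by
              apply one_div_le_one_div_of_le (by positivity)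
              have : (n:ℝ) ≤ m := Nat.cast_le.2 hnm
              linarith
            linarith
          · have : 1/((m:ℝ)+1) ≤ 1/((n:ℝ)+1) := by
              apply one_div_le_one_div_of_le (by positivity)
              have : (n:ℝ) ≤ m := Nat.cast_le.2 hnm
              linarith
            linarith)
        ⟨0, hfin _ _⟩
      rwa [hiInter, hμa] at this
    have htendR : Tendsto (fun n : ℕ => (μ (Ioc (a - 1/(n+1)) (a + 1/(n+1)))).toReal)
        atTop (𝓝 0) := by
      have : Tendsto (fun n : ℕ => (μ (Ioc (a - 1/(n+1)) (a + 1/(n+1)))).toReal)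
          atTop (𝓝 (0 : ℝ≥0∞).toReal) :=
        (ENNReal.tendsto_toReal (by simp)).comp htend
      simpa using this
    obtain ⟨n, hn⟩ := (htendR.eventually (eventually_lt_nhds hε)).exists
    refine ⟨1/(n+1), by positivity, fun b hb => ?_⟩
    rw [Real.dist_eq] at hb
    obtain ⟨hb1, hb2⟩ := abs_lt.1 hb
    rw [Real.dist_eq]
    rcases le_total a b with hab | hba
    · have h1 : G b - G a = (μ (Ioc a b)).toReal := hGdiff hab
      have h2 : (μ (Ioc a b)).toReal ≤ (μ (Ioc (a - 1/(n+1)) (a + 1/(n+1)))).toReal :=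
        ENNReal.toReal_mono (hfin _ _)
          (measure_mono (Ioc_subset_Ioc (by linarith) (by linarith)))
      have habs : |G b - G a| = G b - G a := abs_of_nonneg (by rw [h1]; positivity)
      rw [habs, h1]
      linarith
    · have h1 : G a - G b = (μ (Ioc b a)).toReal := hGdiff hba
      have h2 : (μ (Ioc b a)).toReal ≤ (μ (Ioc (a - 1/(n+1)) (a + 1/(n+1)))).toReal :=
        ENNReal.toReal_mono (hfin _ _)
          (measure_mono (Ioc_subset_Ioc (by linarith) (by linarith)))
      have habs : |G b - G a| = G a - G b := by
        rw [abs_sub_comm]; exact abs_of_nonneg (by rw [h1]; positivity)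
      rw [habs, h1]
      linarith
  -- range / inverse facts
  have hrange : ∀ {a b : ℝ}, a ≤ b → Icc (G a) (G b) ⊆ Set.range G := fun {a b} hab =>
    (intermediate_value_Icc hab hGc.continuousOn).trans (image_subset_range _ _)
  have hGH : ∀ y ∈ Set.range G, G (H y) = y := by
    rintro y ⟨t, rfl⟩; rw [hH]
  have hHmono : ∀ {y₁ y₂ : ℝ}, y₁ ∈ Set.range G → y₂ ∈ Set.range G → y₁ ≤ y₂ → H y₁ ≤ H y₂ := by
    rintro y₁ y₂ ⟨t₁, rfl⟩ ⟨t₂, rfl⟩ h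
    rw [hH, hH]
    exact hGsm.le_iff_le.1 h
  -- the pushforward identity
  have hmap : ∀ {a b : ℝ}, a ≤ b →
      Measure.map G (μ.restrict (Ioc a b)) = volume.restrict (Ioc (G a) (G b)) := by
    intro a b hab
    have hGab : G a ≤ G b := hGsm.monotone hab
    have happly : ∀ c d : ℝ, Measure.map G (μ.restrict (Ioc a b)) (Ioc c d)
        = μ (G ⁻¹' (Ioc c d) ∩ Ioc a b) := by
      intro c d
      rw [Measure.map_apply hGc.measurable measurableSet_Ioc,
        Measure.restrict_apply (hGc.measurable measurableSet_Ioc)]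
    refine Measure.ext_of_Ioc' _ _ (fun c d _ => ?_) (fun c d hcd => ?_)
    · rw [happly]
      exact ((measure_mono Set.inter_subset_right).trans_lt (lt_top_iff_ne_top.2
        (hfin a b))).ne
    · rw [happly]
      set c' : ℝ := min (max c (G a)) (G b) with hc'def
      set d' : ℝ := min (max d (G a)) (G b) with hd'def
      have hc'mem : c' ∈ Icc (G a) (G b) := ⟨le_min (le_max_right _ _) hGab, min_le_right _ _⟩
      have hd'mem : d' ∈ Icc (G a) (G b) := ⟨le_min (le_max_right _ _) hGab, min_le_right _ _⟩
      have hGHc' : G (H c') = c' := hGH _ (hrange hab hc'mem)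
      have hGHd' : G (H d') = d' := hGH _ (hrange hab hd'mem)
      have hpre : G ⁻¹' (Ioc c d) ∩ Ioc a b = Ioc (H c') (H d') := by
        ext s
        simp only [Set.mem_inter_iff, Set.mem_preimage, Set.mem_Ioc]
        constructor
        · rintro ⟨⟨hcs, hsd⟩, has, hsb⟩
          have h1 : G a < G s := hGsm has
          have h2 : G s ≤ G b := hGsm.monotone hsb
          have hc's : c' < G s := (min_le_left _ _).trans_lt (max_lt hcs h1)
          have hsd' : G s ≤ d' := le_min (hsd.trans (le_max_left _ _)) h2
          constructor
          · rw [← hGsm.lt_iff_lt, hGHc']; exact hc's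
          · rw [← hGsm.le_iff_le, hGHd']; exact hsd'
        · rintro ⟨hus, hsv⟩
          have h1 : c' < G s := by rw [← hGHc']; exact hGsm hus
          have h2 : G s ≤ d' := by rw [← hGHd']; exact hGsm.monotone hsv
          have hGac' : G a ≤ c' := hc'mem.1
          have hsa : a < s := hGsm.lt_iff_lt.1 (lt_of_le_of_lt hGac' h1)
          have hsb : s ≤ b := hGsm.le_iff_le.1 (h2.trans (min_le_right _ _))
          have hsd : G s ≤ d := by
            rcases le_total (G a) d with hda | hda
            · calc G s ≤ d' := h2
                _ ≤ max d (G a) := min_le_left _ _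
                _ = d := max_eq_left hda
            · exfalso
              have : d' ≤ G a := (min_le_left _ _).trans_eq (max_eq_right hda)
              have := h2.trans (this.trans hGac')
              exact absurd h1 (not_lt.2 this)
          have hcs : c < G s := by
            rcases le_total c (G a) with hca | hca
            · exact lt_of_le_of_lt (hca.trans hGac') h1
            · rcases le_total c (G b) with hcb | hcb
              · have hcc : c' = c := by rw [hc'def, max_eq_left hca, min_eq_left hcb]
                rwa [hcc] at h1
              · exfalso
                have hcc : c' = G b := by
                  rw [hc'def, min_eq_right (hcb.trans (le_max_left _ _))]
                have : G s ≤ G b := h2.trans (min_le_right _ _)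
                rw [hcc] at h1
                exact absurd h1 (not_lt.2 this)
          exact ⟨⟨hcs, hsd⟩, hsa, hsb⟩
      rw [hpre]
      have hrhs : volume.restrict (Ioc (G a) (G b)) (Ioc c d)
          = ENNReal.ofReal (min d (G b) - max c (G a)) := by
        rw [Measure.restrict_apply measurableSet_Ioc, Set.Ioc_inter_Ioc, Real.volume_Ioc]
      have hlhs : μ (Ioc (H c') (H d')) = ENNReal.ofReal (d' - c') := by
        rcases le_total c' d' with h | h
        · have hu : H c' ≤ H d' := hHmono (hrange hab hc'mem) (hrange hab hd'mem) h
          rw [← ENNReal.ofReal_toReal (hfin (H c') (H d'))]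
          congr 1
          rw [← hGdiff hu, hGHc', hGHd']
        · have hv : H d' ≤ H c' := hHmono (hrange hab hd'mem) (hrange hab hc'mem) h
          rw [Ioc_eq_empty (not_lt.2 hv), measure_empty,
            ENNReal.ofReal_of_nonpos (by linarith)]
      rw [hlhs, hrhs]
      rcases le_total (max c (G a)) (min d (G b)) with h | h
      · have h1 : max d (G a) = d :=
          max_eq_left ((le_max_right c (G a)).trans (h.trans (min_le_left _ _)))
        have h2 : min (max c (G a)) (G b) = max c (G a) :=
          min_eq_left (h.trans (min_le_right _ _))
        rw [hd'def, hc'def, h1, h2]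
      · have hled : d' ≤ c' := by
          rcases le_total d (G b) with h3 | h3
          · have : d ≤ max c (G a) := by rwa [min_eq_left h3] at h
            exact min_le_min (max_le this (le_max_right _ _)) le_rfl
          · have hGb : G b ≤ max c (G a) := by rwa [min_eq_right h3] at h
            calc d' ≤ G b := min_le_right _ _
              _ = min (max c (G a)) (G b) := (min_eq_right hGb).symm
        have hz : min d (G b) - max c (G a) ≤ 0 := by
          rcases le_total d (G b) with h3 | h3
          · rw [min_eq_left h3]
            have : d ≤ max c (G a) := by rwa [min_eq_left h3] at h
            linarith
          · rw [min_eq_right h3]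
            have : G b ≤ max c (G a) := by rwa [min_eq_right h3] at h
            linarith
        rw [ENNReal.ofReal_of_nonpos (by linarith), ENNReal.ofReal_of_nonpos hz]
  -- a.e. positivity of f
  have hae : ∀ᵐ s ∂(volume : Measure ℝ), f s ≠ 0 := by
    have hn : ∀ n : ℕ, volume ({s : ℝ | f s = 0} ∩ Icc (-(n:ℝ)) n) = 0 := by
      intro n
      have h1 := hint (Icc (-(n:ℝ)) n) isCompact_Icc
      have h2 : ∀ᵐ s ∂(volume.restrict (Icc (-(n:ℝ)) n)), d s < ⊤ := ae_lt_top hd h1.ne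
      have h3 : (volume.restrict (Icc (-(n:ℝ)) n)) {s | ¬ d s < ⊤} = 0 := h2
      rw [Measure.restrict_apply₀' (measurableSet_Icc.nullMeasurableSet)] at h3
      refine measure_mono_null ?_ h3
      rintro s ⟨hs0, hsI⟩
      refine ⟨?_, hsI⟩
      simp only [Set.mem_setOf_eq, not_lt, top_le_iff, hd_def]
      rw [Set.mem_setOf_eq] at hs0
      simp [hs0]
    have hnull : volume {s : ℝ | f s = 0} = 0 := by
      refine measure_mono_null (fun s hs => ?_)
        (measure_iUnion_null (fun n : ℕ => hn n))
      obtain ⟨n, hn'⟩ := exists_nat_ge |s|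
      obtain ⟨ha, hb⟩ := abs_le.1 hn'
      exact Set.mem_iUnion.2 ⟨n, hs, ha, hb⟩
    rw [ae_iff]
    simpa only [ne_eq, not_not] using hnull
  -- a.e. measurability of f ∘ H on the relevant intervals
  have hHmeas : ∀ {a b : ℝ}, a ≤ b →
      AEMeasurable (fun y => f (H y)) (volume.restrict (Ioc (G a) (G b))) := by
    intro a b hab
    have hGab : G a ≤ G b := hGsm.monotone hab
    have hclip : ∀ y : ℝ, min (max y (G a)) (G b) ∈ Icc (G a) (G b) :=
      fun y => ⟨le_min (le_max_right _ _) hGab, min_le_right _ _⟩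
    have hH'm : Monotone (fun y => H (min (max y (G a)) (G b))) := fun y₁ y₂ h =>
      hHmono (hrange hab (hclip y₁)) (hrange hab (hclip y₂))
        (min_le_min (max_le_max h le_rfl) le_rfl)
    have hmeas : Measurable (fun y => f (H (min (max y (G a)) (G b)))) :=
      hmf.comp hH'm.measurable
    refine hmeas.aemeasurable.congr ?_
    refine (ae_restrict_iff' measurableSet_Ioc).2 (Filter.Eventually.of_forall fun y hy => ?_)
    have : min (max y (G a)) (G b) = y := by
      rw [max_eq_left hy.1.le, min_eq_left hy.2]
    simp only [this]
  -- the key integral computation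
  have hkey : ∀ {a b : ℝ}, a ≤ b → ∫ y in Ioc (G a) (G b), f (H y) = b - a := by
    intro a b hab
    have haes : AEStronglyMeasurable (fun y => f (H y))
        (volume.restrict (Ioc (G a) (G b))) := (hHmeas hab).aestronglyMeasurable
    rw [integral_eq_lintegral_of_nonneg_ae (Filter.Eventually.of_forall fun y => hnn (H y)) haes]
    have h1 : ∫⁻ y in Ioc (G a) (G b), ENNReal.ofReal (f (H y)) ∂volume
        = ENNReal.ofReal (b - a) := by
      calc ∫⁻ y in Ioc (G a) (G b), ENNReal.ofReal (f (H y)) ∂volume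
          = ∫⁻ y, ENNReal.ofReal (f (H y)) ∂(Measure.map G (μ.restrict (Ioc a b))) := by
            rw [hmap hab]
        _ = ∫⁻ s, ENNReal.ofReal (f (H (G s))) ∂(μ.restrict (Ioc a b)) := by
            refine lintegral_map' ?_ hGc.measurable.aemeasurable
            rw [hmap hab]
            exact (hHmeas hab).ennreal_ofReal
        _ = ∫⁻ s, ENNReal.ofReal (f s) ∂(μ.restrict (Ioc a b)) := by
            simp only [hH]
        _ = ∫⁻ s in Ioc a b, (d * fun s => ENNReal.ofReal (f s)) s ∂volume := by
            rw [hμ_def, restrict_withDensity measurableSet_Ioc,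
              lintegral_withDensity_eq_lintegral_mul _ hd hmf.ennreal_ofReal]
        _ = ∫⁻ s in Ioc a b, (1:ℝ≥0∞) ∂volume := by
            refine lintegral_congr_ae (ae_restrict_of_ae ?_)
            filter_upwards [hae] with s hs
            have h0 : 0 < f s := lt_of_le_of_ne (hnn s) (Ne.symm hs)
            simp only [Pi.mul_apply, hd_def]
            rw [ENNReal.inv_mul_cancel (ENNReal.ofReal_pos.2 h0).ne' ENNReal.ofReal_ne_top]
        _ = ENNReal.ofReal (b - a) := by simp [Real.volume_Ioc]
    rw [h1, ENNReal.toReal_ofReal (by linarith)]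
  -- conclusion
  rintro x ⟨t, rfl⟩
  rw [hH t]
  rcases le_total 0 t with ht | ht
  · have h0 : G 0 ≤ G t := hGsm.monotone ht
    rw [intervalIntegral.integral_of_le (hG0 ▸ h0)]
    have hk := hkey ht
    rw [hG0] at hk
    rw [hk]
    ring
  · have h0 : G t ≤ G 0 := hGsm.monotone ht
    rw [intervalIntegral.integral_symm, intervalIntegral.integral_of_le (hG0 ▸ h0)]
    have hk := hkey ht
    rw [hG0] at hk
    rw [hk]
    ring
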